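/- An antisymmetric bivector X on ℝ⁴ is simple (X = a ∧ b for some vectors a,b ∈ ℝ⁴) and satisfies (⋆X)·Û = 0 for a unit vector Û ∈ ℝ⁴ if and only if X = Û ∧ N for some N ∈ ℝ⁴; equivalently, under the self-dual/anti-self-dual decomposition with u ∈ SU(2) corresponding to Û, the condition uX⁺ + X⁻u = 0 holds iff |X⁺| = |X⁻| and X⁻ = −u X⁺ u^{-1} up to sign conventions. -/

import Mathlib

open Matrix Complex Finset

noncomputable def σ : Fin 3 → Matrix (Fin 2) (Fin 2) ℂ
  | 0 => !![0, 1; 1, 0]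
  | 1 => !![0, -Complex.I; Complex.I, 0]
  | 2 => !![1, 0; 0, -1]

noncomputable def su2vec (v : Fin 3 → ℝ) : Matrix (Fin 2) (Fin 2) ℂ :=
  ∑ i, (v i : ℂ) • σ i

noncomputable def levi {n m : ℕ} (x : Fin n → Fin m) : ℝ :=
  ∏ p ∈ Finset.univ.filter (fun p : Fin n × Fin n => p.1 < p.2),
    ((((x p.2 : ℕ) : ℤ) - ((x p.1 : ℕ) : ℤ)).sign : ℝ)

noncomputable def eps3 (i j k : Fin 3) : ℝ := levi ![i, j, k]
noncomputable def eps4 (i j k l : Fin 4) : ℝ := levi ![i, j, k, l]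
noncomputable def eps5 (i j k l m : Fin 5) : ℝ := levi ![i, j, k, l, m]

noncomputable def det4 (a b c d : Fin 4 → ℝ) : ℝ := Matrix.det (Matrix.of fun I r => ![a, b, c, d] r I)

noncomputable def tstar (a b c : Fin 4 → ℝ) (I : Fin 4) : ℝ :=
  ∑ J, ∑ K, ∑ L, eps4 I J K L * a J * b K * c L

noncomputable def hodge (X : Matrix (Fin 4) (Fin 4) ℝ) : Matrix (Fin 4) (Fin 4) ℝ :=
  Matrix.of fun I J => (1 / 2) * ∑ K, ∑ L, eps4 I J K L * X K L

noncomputable def sdPart (X : Matrix (Fin 4) (Fin 4) ℝ) (i : Fin 3) : ℝ :=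
  (1 / 2) * (∑ j, ∑ k, eps3 i j k * X j.succ k.succ) + X 0 i.succ

noncomputable def asdPart (X : Matrix (Fin 4) (Fin 4) ℝ) (i : Fin 3) : ℝ :=
  (1 / 2) * (∑ j, ∑ k, eps3 i j k * X j.succ k.succ) - X 0 i.succ

noncomputable def wedgeV (a b : Fin 4 → ℝ) : Matrix (Fin 4) (Fin 4) ℝ :=
  Matrix.of fun I J => a I * b J - a J * b I

set_option linter.unnecessarySeqFocus false

def epsZ4 (i j k l : Fin 4) : ℤ :=
  ∏ p ∈ Finset.univ.filter (fun p : Fin 4 × Fin 4 => p.1 < p.2),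
    (((![i,j,k,l] p.2 : ℕ) : ℤ) - ((![i,j,k,l] p.1 : ℕ) : ℤ)).sign
lemma eps4_cast (i j k l : Fin 4) : eps4 i j k l = (epsZ4 i j k l : ℝ) := by
  rw [eps4, levi, epsZ4, Int.cast_prod]
lemma ev0000 : eps4 0 0 0 0 = 0 := by rw [eps4_cast, show epsZ4 0 0 0 0 = 0 from by decide]; norm_num
lemma ev0001 : eps4 0 0 0 1 = 0 := by rw [eps4_cast, show epsZ4 0 0 0 1 = 0 from by decide]; norm_num
lemma ev0002 : eps4 0 0 0 2 = 0 := by rw [eps4_cast, show epsZ4 0 0 0 2 = 0 from by decide]; norm_num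
lemma ev0003 : eps4 0 0 0 3 = 0 := by rw [eps4_cast, show epsZ4 0 0 0 3 = 0 from by decide]; norm_num
lemma ev0010 : eps4 0 0 1 0 = 0 := by rw [eps4_cast, show epsZ4 0 0 1 0 = 0 from by decide]; norm_num
lemma ev0011 : eps4 0 0 1 1 = 0 := by rw [eps4_cast, show epsZ4 0 0 1 1 = 0 from by decide]; norm_num
lemma ev0012 : eps4 0 0 1 2 = 0 := by rw [eps4_cast, show epsZ4 0 0 1 2 = 0 from by decide]; norm_num
lemma ev0013 : eps4 0 0 1 3 = 0 := by rw [eps4_cast, show epsZ4 0 0 1 3 = 0 from by decide]; norm_num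
lemma ev0020 : eps4 0 0 2 0 = 0 := by rw [eps4_cast, show epsZ4 0 0 2 0 = 0 from by decide]; norm_num
lemma ev0021 : eps4 0 0 2 1 = 0 := by rw [eps4_cast, show epsZ4 0 0 2 1 = 0 from by decide]; norm_num
lemma ev0022 : eps4 0 0 2 2 = 0 := by rw [eps4_cast, show epsZ4 0 0 2 2 = 0 from by decide]; norm_num
lemma ev0023 : eps4 0 0 2 3 = 0 := by rw [eps4_cast, show epsZ4 0 0 2 3 = 0 from by decide]; norm_num
lemma ev0030 : eps4 0 0 3 0 = 0 := by rw [eps4_cast, show epsZ4 0 0 3 0 = 0 from by decide]; norm_num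
lemma ev0031 : eps4 0 0 3 1 = 0 := by rw [eps4_cast, show epsZ4 0 0 3 1 = 0 from by decide]; norm_num
lemma ev0032 : eps4 0 0 3 2 = 0 := by rw [eps4_cast, show epsZ4 0 0 3 2 = 0 from by decide]; norm_num
lemma ev0033 : eps4 0 0 3 3 = 0 := by rw [eps4_cast, show epsZ4 0 0 3 3 = 0 from by decide]; norm_num
lemma ev0100 : eps4 0 1 0 0 = 0 := by rw [eps4_cast, show epsZ4 0 1 0 0 = 0 from by decide]; norm_num
lemma ev0101 : eps4 0 1 0 1 = 0 := by rw [eps4_cast, show epsZ4 0 1 0 1 = 0 from by decide]; norm_num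
lemma ev0102 : eps4 0 1 0 2 = 0 := by rw [eps4_cast, show epsZ4 0 1 0 2 = 0 from by decide]; norm_num
lemma ev0103 : eps4 0 1 0 3 = 0 := by rw [eps4_cast, show epsZ4 0 1 0 3 = 0 from by decide]; norm_num
lemma ev0110 : eps4 0 1 1 0 = 0 := by rw [eps4_cast, show epsZ4 0 1 1 0 = 0 from by decide]; norm_num
lemma ev0111 : eps4 0 1 1 1 = 0 := by rw [eps4_cast, show epsZ4 0 1 1 1 = 0 from by decide]; norm_num
lemma ev0112 : eps4 0 1 1 2 = 0 := by rw [eps4_cast, show epsZ4 0 1 1 2 = 0 from by decide]; norm_num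
lemma ev0113 : eps4 0 1 1 3 = 0 := by rw [eps4_cast, show epsZ4 0 1 1 3 = 0 from by decide]; norm_num
lemma ev0120 : eps4 0 1 2 0 = 0 := by rw [eps4_cast, show epsZ4 0 1 2 0 = 0 from by decide]; norm_num
lemma ev0121 : eps4 0 1 2 1 = 0 := by rw [eps4_cast, show epsZ4 0 1 2 1 = 0 from by decide]; norm_num
lemma ev0122 : eps4 0 1 2 2 = 0 := by rw [eps4_cast, show epsZ4 0 1 2 2 = 0 from by decide]; norm_num
lemma ev0123 : eps4 0 1 2 3 = 1 := by rw [eps4_cast, show epsZ4 0 1 2 3 = 1 from by decide]; norm_num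
lemma ev0130 : eps4 0 1 3 0 = 0 := by rw [eps4_cast, show epsZ4 0 1 3 0 = 0 from by decide]; norm_num
lemma ev0131 : eps4 0 1 3 1 = 0 := by rw [eps4_cast, show epsZ4 0 1 3 1 = 0 from by decide]; norm_num
lemma ev0132 : eps4 0 1 3 2 = -1 := by rw [eps4_cast, show epsZ4 0 1 3 2 = -1 from by decide]; norm_num
lemma ev0133 : eps4 0 1 3 3 = 0 := by rw [eps4_cast, show epsZ4 0 1 3 3 = 0 from by decide]; norm_num
lemma ev0200 : eps4 0 2 0 0 = 0 := by rw [eps4_cast, show epsZ4 0 2 0 0 = 0 from by decide]; norm_num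
lemma ev0201 : eps4 0 2 0 1 = 0 := by rw [eps4_cast, show epsZ4 0 2 0 1 = 0 from by decide]; norm_num
lemma ev0202 : eps4 0 2 0 2 = 0 := by rw [eps4_cast, show epsZ4 0 2 0 2 = 0 from by decide]; norm_num
lemma ev0203 : eps4 0 2 0 3 = 0 := by rw [eps4_cast, show epsZ4 0 2 0 3 = 0 from by decide]; norm_num
lemma ev0210 : eps4 0 2 1 0 = 0 := by rw [eps4_cast, show epsZ4 0 2 1 0 = 0 from by decide]; norm_num
lemma ev0211 : eps4 0 2 1 1 = 0 := by rw [eps4_cast, show epsZ4 0 2 1 1 = 0 from by decide]; norm_num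
lemma ev0212 : eps4 0 2 1 2 = 0 := by rw [eps4_cast, show epsZ4 0 2 1 2 = 0 from by decide]; norm_num
lemma ev0213 : eps4 0 2 1 3 = -1 := by rw [eps4_cast, show epsZ4 0 2 1 3 = -1 from by decide]; norm_num
lemma ev0220 : eps4 0 2 2 0 = 0 := by rw [eps4_cast, show epsZ4 0 2 2 0 = 0 from by decide]; norm_num
lemma ev0221 : eps4 0 2 2 1 = 0 := by rw [eps4_cast, show epsZ4 0 2 2 1 = 0 from by decide]; norm_num
lemma ev0222 : eps4 0 2 2 2 = 0 := by rw [eps4_cast, show epsZ4 0 2 2 2 = 0 from by decide]; norm_num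
lemma ev0223 : eps4 0 2 2 3 = 0 := by rw [eps4_cast, show epsZ4 0 2 2 3 = 0 from by decide]; norm_num
lemma ev0230 : eps4 0 2 3 0 = 0 := by rw [eps4_cast, show epsZ4 0 2 3 0 = 0 from by decide]; norm_num
lemma ev0231 : eps4 0 2 3 1 = 1 := by rw [eps4_cast, show epsZ4 0 2 3 1 = 1 from by decide]; norm_num
lemma ev0232 : eps4 0 2 3 2 = 0 := by rw [eps4_cast, show epsZ4 0 2 3 2 = 0 from by decide]; norm_num
lemma ev0233 : eps4 0 2 3 3 = 0 := by rw [eps4_cast, show epsZ4 0 2 3 3 = 0 from by decide]; norm_num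
lemma ev0300 : eps4 0 3 0 0 = 0 := by rw [eps4_cast, show epsZ4 0 3 0 0 = 0 from by decide]; norm_num
lemma ev0301 : eps4 0 3 0 1 = 0 := by rw [eps4_cast, show epsZ4 0 3 0 1 = 0 from by decide]; norm_num
lemma ev0302 : eps4 0 3 0 2 = 0 := by rw [eps4_cast, show epsZ4 0 3 0 2 = 0 from by decide]; norm_num
lemma ev0303 : eps4 0 3 0 3 = 0 := by rw [eps4_cast, show epsZ4 0 3 0 3 = 0 from by decide]; norm_num
lemma ev0310 : eps4 0 3 1 0 = 0 := by rw [eps4_cast, show epsZ4 0 3 1 0 = 0 from by decide]; norm_num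
lemma ev0311 : eps4 0 3 1 1 = 0 := by rw [eps4_cast, show epsZ4 0 3 1 1 = 0 from by decide]; norm_num
lemma ev0312 : eps4 0 3 1 2 = 1 := by rw [eps4_cast, show epsZ4 0 3 1 2 = 1 from by decide]; norm_num
lemma ev0313 : eps4 0 3 1 3 = 0 := by rw [eps4_cast, show epsZ4 0 3 1 3 = 0 from by decide]; norm_num
lemma ev0320 : eps4 0 3 2 0 = 0 := by rw [eps4_cast, show epsZ4 0 3 2 0 = 0 from by decide]; norm_num
lemma ev0321 : eps4 0 3 2 1 = -1 := by rw [eps4_cast, show epsZ4 0 3 2 1 = -1 from by decide]; norm_num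
lemma ev0322 : eps4 0 3 2 2 = 0 := by rw [eps4_cast, show epsZ4 0 3 2 2 = 0 from by decide]; norm_num
lemma ev0323 : eps4 0 3 2 3 = 0 := by rw [eps4_cast, show epsZ4 0 3 2 3 = 0 from by decide]; norm_num
lemma ev0330 : eps4 0 3 3 0 = 0 := by rw [eps4_cast, show epsZ4 0 3 3 0 = 0 from by decide]; norm_num
lemma ev0331 : eps4 0 3 3 1 = 0 := by rw [eps4_cast, show epsZ4 0 3 3 1 = 0 from by decide]; norm_num
lemma ev0332 : eps4 0 3 3 2 = 0 := by rw [eps4_cast, show epsZ4 0 3 3 2 = 0 from by decide]; norm_num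
lemma ev0333 : eps4 0 3 3 3 = 0 := by rw [eps4_cast, show epsZ4 0 3 3 3 = 0 from by decide]; norm_num
lemma ev1000 : eps4 1 0 0 0 = 0 := by rw [eps4_cast, show epsZ4 1 0 0 0 = 0 from by decide]; norm_num
lemma ev1001 : eps4 1 0 0 1 = 0 := by rw [eps4_cast, show epsZ4 1 0 0 1 = 0 from by decide]; norm_num
lemma ev1002 : eps4 1 0 0 2 = 0 := by rw [eps4_cast, show epsZ4 1 0 0 2 = 0 from by decide]; norm_num
lemma ev1003 : eps4 1 0 0 3 = 0 := by rw [eps4_cast, show epsZ4 1 0 0 3 = 0 from by decide]; norm_num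
lemma ev1010 : eps4 1 0 1 0 = 0 := by rw [eps4_cast, show epsZ4 1 0 1 0 = 0 from by decide]; norm_num
lemma ev1011 : eps4 1 0 1 1 = 0 := by rw [eps4_cast, show epsZ4 1 0 1 1 = 0 from by decide]; norm_num
lemma ev1012 : eps4 1 0 1 2 = 0 := by rw [eps4_cast, show epsZ4 1 0 1 2 = 0 from by decide]; norm_num
lemma ev1013 : eps4 1 0 1 3 = 0 := by rw [eps4_cast, show epsZ4 1 0 1 3 = 0 from by decide]; norm_num
lemma ev1020 : eps4 1 0 2 0 = 0 := by rw [eps4_cast, show epsZ4 1 0 2 0 = 0 from by decide]; norm_num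
lemma ev1021 : eps4 1 0 2 1 = 0 := by rw [eps4_cast, show epsZ4 1 0 2 1 = 0 from by decide]; norm_num
lemma ev1022 : eps4 1 0 2 2 = 0 := by rw [eps4_cast, show epsZ4 1 0 2 2 = 0 from by decide]; norm_num
lemma ev1023 : eps4 1 0 2 3 = -1 := by rw [eps4_cast, show epsZ4 1 0 2 3 = -1 from by decide]; norm_num
lemma ev1030 : eps4 1 0 3 0 = 0 := by rw [eps4_cast, show epsZ4 1 0 3 0 = 0 from by decide]; norm_num
lemma ev1031 : eps4 1 0 3 1 = 0 := by rw [eps4_cast, show epsZ4 1 0 3 1 = 0 from by decide]; norm_num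
lemma ev1032 : eps4 1 0 3 2 = 1 := by rw [eps4_cast, show epsZ4 1 0 3 2 = 1 from by decide]; norm_num
lemma ev1033 : eps4 1 0 3 3 = 0 := by rw [eps4_cast, show epsZ4 1 0 3 3 = 0 from by decide]; norm_num
lemma ev1100 : eps4 1 1 0 0 = 0 := by rw [eps4_cast, show epsZ4 1 1 0 0 = 0 from by decide]; norm_num
lemma ev1101 : eps4 1 1 0 1 = 0 := by rw [eps4_cast, show epsZ4 1 1 0 1 = 0 from by decide]; norm_num
lemma ev1102 : eps4 1 1 0 2 = 0 := by rw [eps4_cast, show epsZ4 1 1 0 2 = 0 from by decide]; norm_num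
lemma ev1103 : eps4 1 1 0 3 = 0 := by rw [eps4_cast, show epsZ4 1 1 0 3 = 0 from by decide]; norm_num
lemma ev1110 : eps4 1 1 1 0 = 0 := by rw [eps4_cast, show epsZ4 1 1 1 0 = 0 from by decide]; norm_num
lemma ev1111 : eps4 1 1 1 1 = 0 := by rw [eps4_cast, show epsZ4 1 1 1 1 = 0 from by decide]; norm_num
lemma ev1112 : eps4 1 1 1 2 = 0 := by rw [eps4_cast, show epsZ4 1 1 1 2 = 0 from by decide]; norm_num
lemma ev1113 : eps4 1 1 1 3 = 0 := by rw [eps4_cast, show epsZ4 1 1 1 3 = 0 from by decide]; norm_num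
lemma ev1120 : eps4 1 1 2 0 = 0 := by rw [eps4_cast, show epsZ4 1 1 2 0 = 0 from by decide]; norm_num
lemma ev1121 : eps4 1 1 2 1 = 0 := by rw [eps4_cast, show epsZ4 1 1 2 1 = 0 from by decide]; norm_num
lemma ev1122 : eps4 1 1 2 2 = 0 := by rw [eps4_cast, show epsZ4 1 1 2 2 = 0 from by decide]; norm_num
lemma ev1123 : eps4 1 1 2 3 = 0 := by rw [eps4_cast, show epsZ4 1 1 2 3 = 0 from by decide]; norm_num
lemma ev1130 : eps4 1 1 3 0 = 0 := by rw [eps4_cast, show epsZ4 1 1 3 0 = 0 from by decide]; norm_num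
lemma ev1131 : eps4 1 1 3 1 = 0 := by rw [eps4_cast, show epsZ4 1 1 3 1 = 0 from by decide]; norm_num
lemma ev1132 : eps4 1 1 3 2 = 0 := by rw [eps4_cast, show epsZ4 1 1 3 2 = 0 from by decide]; norm_num
lemma ev1133 : eps4 1 1 3 3 = 0 := by rw [eps4_cast, show epsZ4 1 1 3 3 = 0 from by decide]; norm_num
lemma ev1200 : eps4 1 2 0 0 = 0 := by rw [eps4_cast, show epsZ4 1 2 0 0 = 0 from by decide]; norm_num
lemma ev1201 : eps4 1 2 0 1 = 0 := by rw [eps4_cast, show epsZ4 1 2 0 1 = 0 from by decide]; norm_num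
lemma ev1202 : eps4 1 2 0 2 = 0 := by rw [eps4_cast, show epsZ4 1 2 0 2 = 0 from by decide]; norm_num
lemma ev1203 : eps4 1 2 0 3 = 1 := by rw [eps4_cast, show epsZ4 1 2 0 3 = 1 from by decide]; norm_num
lemma ev1210 : eps4 1 2 1 0 = 0 := by rw [eps4_cast, show epsZ4 1 2 1 0 = 0 from by decide]; norm_num
lemma ev1211 : eps4 1 2 1 1 = 0 := by rw [eps4_cast, show epsZ4 1 2 1 1 = 0 from by decide]; norm_num
lemma ev1212 : eps4 1 2 1 2 = 0 := by rw [eps4_cast, show epsZ4 1 2 1 2 = 0 from by decide]; norm_num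
lemma ev1213 : eps4 1 2 1 3 = 0 := by rw [eps4_cast, show epsZ4 1 2 1 3 = 0 from by decide]; norm_num
lemma ev1220 : eps4 1 2 2 0 = 0 := by rw [eps4_cast, show epsZ4 1 2 2 0 = 0 from by decide]; norm_num
lemma ev1221 : eps4 1 2 2 1 = 0 := by rw [eps4_cast, show epsZ4 1 2 2 1 = 0 from by decide]; norm_num
lemma ev1222 : eps4 1 2 2 2 = 0 := by rw [eps4_cast, show epsZ4 1 2 2 2 = 0 from by decide]; norm_num
lemma ev1223 : eps4 1 2 2 3 = 0 := by rw [eps4_cast, show epsZ4 1 2 2 3 = 0 from by decide]; norm_num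
lemma ev1230 : eps4 1 2 3 0 = -1 := by rw [eps4_cast, show epsZ4 1 2 3 0 = -1 from by decide]; norm_num
lemma ev1231 : eps4 1 2 3 1 = 0 := by rw [eps4_cast, show epsZ4 1 2 3 1 = 0 from by decide]; norm_num
lemma ev1232 : eps4 1 2 3 2 = 0 := by rw [eps4_cast, show epsZ4 1 2 3 2 = 0 from by decide]; norm_num
lemma ev1233 : eps4 1 2 3 3 = 0 := by rw [eps4_cast, show epsZ4 1 2 3 3 = 0 from by decide]; norm_num
lemma ev1300 : eps4 1 3 0 0 = 0 := by rw [eps4_cast, show epsZ4 1 3 0 0 = 0 from by decide]; norm_num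
lemma ev1301 : eps4 1 3 0 1 = 0 := by rw [eps4_cast, show epsZ4 1 3 0 1 = 0 from by decide]; norm_num
lemma ev1302 : eps4 1 3 0 2 = -1 := by rw [eps4_cast, show epsZ4 1 3 0 2 = -1 from by decide]; norm_num
lemma ev1303 : eps4 1 3 0 3 = 0 := by rw [eps4_cast, show epsZ4 1 3 0 3 = 0 from by decide]; norm_num
lemma ev1310 : eps4 1 3 1 0 = 0 := by rw [eps4_cast, show epsZ4 1 3 1 0 = 0 from by decide]; norm_num
lemma ev1311 : eps4 1 3 1 1 = 0 := by rw [eps4_cast, show epsZ4 1 3 1 1 = 0 from by decide]; norm_num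
lemma ev1312 : eps4 1 3 1 2 = 0 := by rw [eps4_cast, show epsZ4 1 3 1 2 = 0 from by decide]; norm_num
lemma ev1313 : eps4 1 3 1 3 = 0 := by rw [eps4_cast, show epsZ4 1 3 1 3 = 0 from by decide]; norm_num
lemma ev1320 : eps4 1 3 2 0 = 1 := by rw [eps4_cast, show epsZ4 1 3 2 0 = 1 from by decide]; norm_num
lemma ev1321 : eps4 1 3 2 1 = 0 := by rw [eps4_cast, show epsZ4 1 3 2 1 = 0 from by decide]; norm_num
lemma ev1322 : eps4 1 3 2 2 = 0 := by rw [eps4_cast, show epsZ4 1 3 2 2 = 0 from by decide]; norm_num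
lemma ev1323 : eps4 1 3 2 3 = 0 := by rw [eps4_cast, show epsZ4 1 3 2 3 = 0 from by decide]; norm_num
lemma ev1330 : eps4 1 3 3 0 = 0 := by rw [eps4_cast, show epsZ4 1 3 3 0 = 0 from by decide]; norm_num
lemma ev1331 : eps4 1 3 3 1 = 0 := by rw [eps4_cast, show epsZ4 1 3 3 1 = 0 from by decide]; norm_num
lemma ev1332 : eps4 1 3 3 2 = 0 := by rw [eps4_cast, show epsZ4 1 3 3 2 = 0 from by decide]; norm_num
lemma ev1333 : eps4 1 3 3 3 = 0 := by rw [eps4_cast, show epsZ4 1 3 3 3 = 0 from by decide]; norm_num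
lemma ev2000 : eps4 2 0 0 0 = 0 := by rw [eps4_cast, show epsZ4 2 0 0 0 = 0 from by decide]; norm_num
lemma ev2001 : eps4 2 0 0 1 = 0 := by rw [eps4_cast, show epsZ4 2 0 0 1 = 0 from by decide]; norm_num
lemma ev2002 : eps4 2 0 0 2 = 0 := by rw [eps4_cast, show epsZ4 2 0 0 2 = 0 from by decide]; norm_num
lemma ev2003 : eps4 2 0 0 3 = 0 := by rw [eps4_cast, show epsZ4 2 0 0 3 = 0 from by decide]; norm_num
lemma ev2010 : eps4 2 0 1 0 = 0 := by rw [eps4_cast, show epsZ4 2 0 1 0 = 0 from by decide]; norm_num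
lemma ev2011 : eps4 2 0 1 1 = 0 := by rw [eps4_cast, show epsZ4 2 0 1 1 = 0 from by decide]; norm_num
lemma ev2012 : eps4 2 0 1 2 = 0 := by rw [eps4_cast, show epsZ4 2 0 1 2 = 0 from by decide]; norm_num
lemma ev2013 : eps4 2 0 1 3 = 1 := by rw [eps4_cast, show epsZ4 2 0 1 3 = 1 from by decide]; norm_num
lemma ev2020 : eps4 2 0 2 0 = 0 := by rw [eps4_cast, show epsZ4 2 0 2 0 = 0 from by decide]; norm_num
lemma ev2021 : eps4 2 0 2 1 = 0 := by rw [eps4_cast, show epsZ4 2 0 2 1 = 0 from by decide]; norm_num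
lemma ev2022 : eps4 2 0 2 2 = 0 := by rw [eps4_cast, show epsZ4 2 0 2 2 = 0 from by decide]; norm_num
lemma ev2023 : eps4 2 0 2 3 = 0 := by rw [eps4_cast, show epsZ4 2 0 2 3 = 0 from by decide]; norm_num
lemma ev2030 : eps4 2 0 3 0 = 0 := by rw [eps4_cast, show epsZ4 2 0 3 0 = 0 from by decide]; norm_num
lemma ev2031 : eps4 2 0 3 1 = -1 := by rw [eps4_cast, show epsZ4 2 0 3 1 = -1 from by decide]; norm_num
lemma ev2032 : eps4 2 0 3 2 = 0 := by rw [eps4_cast, show epsZ4 2 0 3 2 = 0 from by decide]; norm_num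
lemma ev2033 : eps4 2 0 3 3 = 0 := by rw [eps4_cast, show epsZ4 2 0 3 3 = 0 from by decide]; norm_num
lemma ev2100 : eps4 2 1 0 0 = 0 := by rw [eps4_cast, show epsZ4 2 1 0 0 = 0 from by decide]; norm_num
lemma ev2101 : eps4 2 1 0 1 = 0 := by rw [eps4_cast, show epsZ4 2 1 0 1 = 0 from by decide]; norm_num
lemma ev2102 : eps4 2 1 0 2 = 0 := by rw [eps4_cast, show epsZ4 2 1 0 2 = 0 from by decide]; norm_num
lemma ev2103 : eps4 2 1 0 3 = -1 := by rw [eps4_cast, show epsZ4 2 1 0 3 = -1 from by decide]; norm_num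
lemma ev2110 : eps4 2 1 1 0 = 0 := by rw [eps4_cast, show epsZ4 2 1 1 0 = 0 from by decide]; norm_num
lemma ev2111 : eps4 2 1 1 1 = 0 := by rw [eps4_cast, show epsZ4 2 1 1 1 = 0 from by decide]; norm_num
lemma ev2112 : eps4 2 1 1 2 = 0 := by rw [eps4_cast, show epsZ4 2 1 1 2 = 0 from by decide]; norm_num
lemma ev2113 : eps4 2 1 1 3 = 0 := by rw [eps4_cast, show epsZ4 2 1 1 3 = 0 from by decide]; norm_num
lemma ev2120 : eps4 2 1 2 0 = 0 := by rw [eps4_cast, show epsZ4 2 1 2 0 = 0 from by decide]; norm_num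
lemma ev2121 : eps4 2 1 2 1 = 0 := by rw [eps4_cast, show epsZ4 2 1 2 1 = 0 from by decide]; norm_num
lemma ev2122 : eps4 2 1 2 2 = 0 := by rw [eps4_cast, show epsZ4 2 1 2 2 = 0 from by decide]; norm_num
lemma ev2123 : eps4 2 1 2 3 = 0 := by rw [eps4_cast, show epsZ4 2 1 2 3 = 0 from by decide]; norm_num
lemma ev2130 : eps4 2 1 3 0 = 1 := by rw [eps4_cast, show epsZ4 2 1 3 0 = 1 from by decide]; norm_num
lemma ev2131 : eps4 2 1 3 1 = 0 := by rw [eps4_cast, show epsZ4 2 1 3 1 = 0 from by decide]; norm_num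
lemma ev2132 : eps4 2 1 3 2 = 0 := by rw [eps4_cast, show epsZ4 2 1 3 2 = 0 from by decide]; norm_num
lemma ev2133 : eps4 2 1 3 3 = 0 := by rw [eps4_cast, show epsZ4 2 1 3 3 = 0 from by decide]; norm_num
lemma ev2200 : eps4 2 2 0 0 = 0 := by rw [eps4_cast, show epsZ4 2 2 0 0 = 0 from by decide]; norm_num
lemma ev2201 : eps4 2 2 0 1 = 0 := by rw [eps4_cast, show epsZ4 2 2 0 1 = 0 from by decide]; norm_num
lemma ev2202 : eps4 2 2 0 2 = 0 := by rw [eps4_cast, show epsZ4 2 2 0 2 = 0 from by decide]; norm_num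
lemma ev2203 : eps4 2 2 0 3 = 0 := by rw [eps4_cast, show epsZ4 2 2 0 3 = 0 from by decide]; norm_num
lemma ev2210 : eps4 2 2 1 0 = 0 := by rw [eps4_cast, show epsZ4 2 2 1 0 = 0 from by decide]; norm_num
lemma ev2211 : eps4 2 2 1 1 = 0 := by rw [eps4_cast, show epsZ4 2 2 1 1 = 0 from by decide]; norm_num
lemma ev2212 : eps4 2 2 1 2 = 0 := by rw [eps4_cast, show epsZ4 2 2 1 2 = 0 from by decide]; norm_num
lemma ev2213 : eps4 2 2 1 3 = 0 := by rw [eps4_cast, show epsZ4 2 2 1 3 = 0 from by decide]; norm_num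
lemma ev2220 : eps4 2 2 2 0 = 0 := by rw [eps4_cast, show epsZ4 2 2 2 0 = 0 from by decide]; norm_num
lemma ev2221 : eps4 2 2 2 1 = 0 := by rw [eps4_cast, show epsZ4 2 2 2 1 = 0 from by decide]; norm_num
lemma ev2222 : eps4 2 2 2 2 = 0 := by rw [eps4_cast, show epsZ4 2 2 2 2 = 0 from by decide]; norm_num
lemma ev2223 : eps4 2 2 2 3 = 0 := by rw [eps4_cast, show epsZ4 2 2 2 3 = 0 from by decide]; norm_num
lemma ev2230 : eps4 2 2 3 0 = 0 := by rw [eps4_cast, show epsZ4 2 2 3 0 = 0 from by decide]; norm_num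
lemma ev2231 : eps4 2 2 3 1 = 0 := by rw [eps4_cast, show epsZ4 2 2 3 1 = 0 from by decide]; norm_num
lemma ev2232 : eps4 2 2 3 2 = 0 := by rw [eps4_cast, show epsZ4 2 2 3 2 = 0 from by decide]; norm_num
lemma ev2233 : eps4 2 2 3 3 = 0 := by rw [eps4_cast, show epsZ4 2 2 3 3 = 0 from by decide]; norm_num
lemma ev2300 : eps4 2 3 0 0 = 0 := by rw [eps4_cast, show epsZ4 2 3 0 0 = 0 from by decide]; norm_num
lemma ev2301 : eps4 2 3 0 1 = 1 := by rw [eps4_cast, show epsZ4 2 3 0 1 = 1 from by decide]; norm_num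
lemma ev2302 : eps4 2 3 0 2 = 0 := by rw [eps4_cast, show epsZ4 2 3 0 2 = 0 from by decide]; norm_num
lemma ev2303 : eps4 2 3 0 3 = 0 := by rw [eps4_cast, show epsZ4 2 3 0 3 = 0 from by decide]; norm_num
lemma ev2310 : eps4 2 3 1 0 = -1 := by rw [eps4_cast, show epsZ4 2 3 1 0 = -1 from by decide]; norm_num
lemma ev2311 : eps4 2 3 1 1 = 0 := by rw [eps4_cast, show epsZ4 2 3 1 1 = 0 from by decide]; norm_num
lemma ev2312 : eps4 2 3 1 2 = 0 := by rw [eps4_cast, show epsZ4 2 3 1 2 = 0 from by decide]; norm_num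
lemma ev2313 : eps4 2 3 1 3 = 0 := by rw [eps4_cast, show epsZ4 2 3 1 3 = 0 from by decide]; norm_num
lemma ev2320 : eps4 2 3 2 0 = 0 := by rw [eps4_cast, show epsZ4 2 3 2 0 = 0 from by decide]; norm_num
lemma ev2321 : eps4 2 3 2 1 = 0 := by rw [eps4_cast, show epsZ4 2 3 2 1 = 0 from by decide]; norm_num
lemma ev2322 : eps4 2 3 2 2 = 0 := by rw [eps4_cast, show epsZ4 2 3 2 2 = 0 from by decide]; norm_num
lemma ev2323 : eps4 2 3 2 3 = 0 := by rw [eps4_cast, show epsZ4 2 3 2 3 = 0 from by decide]; norm_num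
lemma ev2330 : eps4 2 3 3 0 = 0 := by rw [eps4_cast, show epsZ4 2 3 3 0 = 0 from by decide]; norm_num
lemma ev2331 : eps4 2 3 3 1 = 0 := by rw [eps4_cast, show epsZ4 2 3 3 1 = 0 from by decide]; norm_num
lemma ev2332 : eps4 2 3 3 2 = 0 := by rw [eps4_cast, show epsZ4 2 3 3 2 = 0 from by decide]; norm_num
lemma ev2333 : eps4 2 3 3 3 = 0 := by rw [eps4_cast, show epsZ4 2 3 3 3 = 0 from by decide]; norm_num
lemma ev3000 : eps4 3 0 0 0 = 0 := by rw [eps4_cast, show epsZ4 3 0 0 0 = 0 from by decide]; norm_num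
lemma ev3001 : eps4 3 0 0 1 = 0 := by rw [eps4_cast, show epsZ4 3 0 0 1 = 0 from by decide]; norm_num
lemma ev3002 : eps4 3 0 0 2 = 0 := by rw [eps4_cast, show epsZ4 3 0 0 2 = 0 from by decide]; norm_num
lemma ev3003 : eps4 3 0 0 3 = 0 := by rw [eps4_cast, show epsZ4 3 0 0 3 = 0 from by decide]; norm_num
lemma ev3010 : eps4 3 0 1 0 = 0 := by rw [eps4_cast, show epsZ4 3 0 1 0 = 0 from by decide]; norm_num
lemma ev3011 : eps4 3 0 1 1 = 0 := by rw [eps4_cast, show epsZ4 3 0 1 1 = 0 from by decide]; norm_num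
lemma ev3012 : eps4 3 0 1 2 = -1 := by rw [eps4_cast, show epsZ4 3 0 1 2 = -1 from by decide]; norm_num
lemma ev3013 : eps4 3 0 1 3 = 0 := by rw [eps4_cast, show epsZ4 3 0 1 3 = 0 from by decide]; norm_num
lemma ev3020 : eps4 3 0 2 0 = 0 := by rw [eps4_cast, show epsZ4 3 0 2 0 = 0 from by decide]; norm_num
lemma ev3021 : eps4 3 0 2 1 = 1 := by rw [eps4_cast, show epsZ4 3 0 2 1 = 1 from by decide]; norm_num
lemma ev3022 : eps4 3 0 2 2 = 0 := by rw [eps4_cast, show epsZ4 3 0 2 2 = 0 from by decide]; norm_num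
lemma ev3023 : eps4 3 0 2 3 = 0 := by rw [eps4_cast, show epsZ4 3 0 2 3 = 0 from by decide]; norm_num
lemma ev3030 : eps4 3 0 3 0 = 0 := by rw [eps4_cast, show epsZ4 3 0 3 0 = 0 from by decide]; norm_num
lemma ev3031 : eps4 3 0 3 1 = 0 := by rw [eps4_cast, show epsZ4 3 0 3 1 = 0 from by decide]; norm_num
lemma ev3032 : eps4 3 0 3 2 = 0 := by rw [eps4_cast, show epsZ4 3 0 3 2 = 0 from by decide]; norm_num
lemma ev3033 : eps4 3 0 3 3 = 0 := by rw [eps4_cast, show epsZ4 3 0 3 3 = 0 from by decide]; norm_num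
lemma ev3100 : eps4 3 1 0 0 = 0 := by rw [eps4_cast, show epsZ4 3 1 0 0 = 0 from by decide]; norm_num
lemma ev3101 : eps4 3 1 0 1 = 0 := by rw [eps4_cast, show epsZ4 3 1 0 1 = 0 from by decide]; norm_num
lemma ev3102 : eps4 3 1 0 2 = 1 := by rw [eps4_cast, show epsZ4 3 1 0 2 = 1 from by decide]; norm_num
lemma ev3103 : eps4 3 1 0 3 = 0 := by rw [eps4_cast, show epsZ4 3 1 0 3 = 0 from by decide]; norm_num
lemma ev3110 : eps4 3 1 1 0 = 0 := by rw [eps4_cast, show epsZ4 3 1 1 0 = 0 from by decide]; norm_num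
lemma ev3111 : eps4 3 1 1 1 = 0 := by rw [eps4_cast, show epsZ4 3 1 1 1 = 0 from by decide]; norm_num
lemma ev3112 : eps4 3 1 1 2 = 0 := by rw [eps4_cast, show epsZ4 3 1 1 2 = 0 from by decide]; norm_num
lemma ev3113 : eps4 3 1 1 3 = 0 := by rw [eps4_cast, show epsZ4 3 1 1 3 = 0 from by decide]; norm_num
lemma ev3120 : eps4 3 1 2 0 = -1 := by rw [eps4_cast, show epsZ4 3 1 2 0 = -1 from by decide]; norm_num
lemma ev3121 : eps4 3 1 2 1 = 0 := by rw [eps4_cast, show epsZ4 3 1 2 1 = 0 from by decide]; norm_num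
lemma ev3122 : eps4 3 1 2 2 = 0 := by rw [eps4_cast, show epsZ4 3 1 2 2 = 0 from by decide]; norm_num
lemma ev3123 : eps4 3 1 2 3 = 0 := by rw [eps4_cast, show epsZ4 3 1 2 3 = 0 from by decide]; norm_num
lemma ev3130 : eps4 3 1 3 0 = 0 := by rw [eps4_cast, show epsZ4 3 1 3 0 = 0 from by decide]; norm_num
lemma ev3131 : eps4 3 1 3 1 = 0 := by rw [eps4_cast, show epsZ4 3 1 3 1 = 0 from by decide]; norm_num
lemma ev3132 : eps4 3 1 3 2 = 0 := by rw [eps4_cast, show epsZ4 3 1 3 2 = 0 from by decide]; norm_num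
lemma ev3133 : eps4 3 1 3 3 = 0 := by rw [eps4_cast, show epsZ4 3 1 3 3 = 0 from by decide]; norm_num
lemma ev3200 : eps4 3 2 0 0 = 0 := by rw [eps4_cast, show epsZ4 3 2 0 0 = 0 from by decide]; norm_num
lemma ev3201 : eps4 3 2 0 1 = -1 := by rw [eps4_cast, show epsZ4 3 2 0 1 = -1 from by decide]; norm_num
lemma ev3202 : eps4 3 2 0 2 = 0 := by rw [eps4_cast, show epsZ4 3 2 0 2 = 0 from by decide]; norm_num
lemma ev3203 : eps4 3 2 0 3 = 0 := by rw [eps4_cast, show epsZ4 3 2 0 3 = 0 from by decide]; norm_num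
lemma ev3210 : eps4 3 2 1 0 = 1 := by rw [eps4_cast, show epsZ4 3 2 1 0 = 1 from by decide]; norm_num
lemma ev3211 : eps4 3 2 1 1 = 0 := by rw [eps4_cast, show epsZ4 3 2 1 1 = 0 from by decide]; norm_num
lemma ev3212 : eps4 3 2 1 2 = 0 := by rw [eps4_cast, show epsZ4 3 2 1 2 = 0 from by decide]; norm_num
lemma ev3213 : eps4 3 2 1 3 = 0 := by rw [eps4_cast, show epsZ4 3 2 1 3 = 0 from by decide]; norm_num
lemma ev3220 : eps4 3 2 2 0 = 0 := by rw [eps4_cast, show epsZ4 3 2 2 0 = 0 from by decide]; norm_num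
lemma ev3221 : eps4 3 2 2 1 = 0 := by rw [eps4_cast, show epsZ4 3 2 2 1 = 0 from by decide]; norm_num
lemma ev3222 : eps4 3 2 2 2 = 0 := by rw [eps4_cast, show epsZ4 3 2 2 2 = 0 from by decide]; norm_num
lemma ev3223 : eps4 3 2 2 3 = 0 := by rw [eps4_cast, show epsZ4 3 2 2 3 = 0 from by decide]; norm_num
lemma ev3230 : eps4 3 2 3 0 = 0 := by rw [eps4_cast, show epsZ4 3 2 3 0 = 0 from by decide]; norm_num
lemma ev3231 : eps4 3 2 3 1 = 0 := by rw [eps4_cast, show epsZ4 3 2 3 1 = 0 from by decide]; norm_num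
lemma ev3232 : eps4 3 2 3 2 = 0 := by rw [eps4_cast, show epsZ4 3 2 3 2 = 0 from by decide]; norm_num
lemma ev3233 : eps4 3 2 3 3 = 0 := by rw [eps4_cast, show epsZ4 3 2 3 3 = 0 from by decide]; norm_num
lemma ev3300 : eps4 3 3 0 0 = 0 := by rw [eps4_cast, show epsZ4 3 3 0 0 = 0 from by decide]; norm_num
lemma ev3301 : eps4 3 3 0 1 = 0 := by rw [eps4_cast, show epsZ4 3 3 0 1 = 0 from by decide]; norm_num
lemma ev3302 : eps4 3 3 0 2 = 0 := by rw [eps4_cast, show epsZ4 3 3 0 2 = 0 from by decide]; norm_num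
lemma ev3303 : eps4 3 3 0 3 = 0 := by rw [eps4_cast, show epsZ4 3 3 0 3 = 0 from by decide]; norm_num
lemma ev3310 : eps4 3 3 1 0 = 0 := by rw [eps4_cast, show epsZ4 3 3 1 0 = 0 from by decide]; norm_num
lemma ev3311 : eps4 3 3 1 1 = 0 := by rw [eps4_cast, show epsZ4 3 3 1 1 = 0 from by decide]; norm_num
lemma ev3312 : eps4 3 3 1 2 = 0 := by rw [eps4_cast, show epsZ4 3 3 1 2 = 0 from by decide]; norm_num
lemma ev3313 : eps4 3 3 1 3 = 0 := by rw [eps4_cast, show epsZ4 3 3 1 3 = 0 from by decide]; norm_num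
lemma ev3320 : eps4 3 3 2 0 = 0 := by rw [eps4_cast, show epsZ4 3 3 2 0 = 0 from by decide]; norm_num
lemma ev3321 : eps4 3 3 2 1 = 0 := by rw [eps4_cast, show epsZ4 3 3 2 1 = 0 from by decide]; norm_num
lemma ev3322 : eps4 3 3 2 2 = 0 := by rw [eps4_cast, show epsZ4 3 3 2 2 = 0 from by decide]; norm_num
lemma ev3323 : eps4 3 3 2 3 = 0 := by rw [eps4_cast, show epsZ4 3 3 2 3 = 0 from by decide]; norm_num
lemma ev3330 : eps4 3 3 3 0 = 0 := by rw [eps4_cast, show epsZ4 3 3 3 0 = 0 from by decide]; norm_num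
lemma ev3331 : eps4 3 3 3 1 = 0 := by rw [eps4_cast, show epsZ4 3 3 3 1 = 0 from by decide]; norm_num
lemma ev3332 : eps4 3 3 3 2 = 0 := by rw [eps4_cast, show epsZ4 3 3 3 2 = 0 from by decide]; norm_num
lemma ev3333 : eps4 3 3 3 3 = 0 := by rw [eps4_cast, show epsZ4 3 3 3 3 = 0 from by decide]; norm_num

lemma part1_fwd (U a b : Fin 4 → ℝ) (hU : ∑ I, U I ^ 2 = 1)
    (hh : ∀ I, ∑ J, hodge (wedgeV a b) I J * U J = 0) :
    wedgeV a b = wedgeV U (fun J => (∑ K, U K * a K) * b J - (∑ K, U K * b K) * a J) := by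
  have h0 := hh 0; have h1 := hh 1; have h2 := hh 2; have h3 := hh 3
  simp only [hodge, wedgeV, Matrix.of_apply, Fin.sum_univ_four, ev0000, ev0001, ev0002, ev0003, ev0010, ev0011, ev0012, ev0013, ev0020, ev0021, ev0022, ev0023, ev0030, ev0031, ev0032, ev0033, ev0100, ev0101, ev0102, ev0103, ev0110, ev0111, ev0112, ev0113, ev0120, ev0121, ev0122, ev0123, ev0130, ev0131, ev0132, ev0133, ev0200, ev0201, ev0202, ev0203, ev0210, ev0211, ev0212, ev0213, ev0220, ev0221, ev0222, ev0223, ev0230, ev0231, ev0232, ev0233, ev0300, ev0301, ev0302, ev0303, ev0310, ev0311, ev0312, ev0313, ev0320, ev0321, ev0322, ev0323, ev0330, ev0331, ev0332, ev0333, ev1000, ev1001, ev1002, ev1003, ev1010, ev1011, ev1012, ev1013, ev1020, ev1021, ev1022, ev1023, ev1030, ev1031, ev1032, ev1033, ev1100, ev1101, ev1102, ev1103, ev1110, ev1111, ev1112, ev1113, ev1120, ev1121, ev1122, ev1123, ev1130, ev1131, ev1132, ev1133, ev1200, ev1201, ev1202, ev1203, ev1210, ev1211, ev1212, ev1213, ev1220,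 ev1221, ev1222, ev1223, ev1230, ev1231, ev1232, ev1233, ev1300, ev1301, ev1302, ev1303, ev1310, ev1311, ev1312, ev1313, ev1320, ev1321, ev1322, ev1323, ev1330, ev1331, ev1332, ev1333, ev2000, ev2001, ev2002, ev2003, ev2010, ev2011, ev2012, ev2013, ev2020, ev2021, ev2022, ev2023, ev2030, ev2031, ev2032, ev2033, ev2100, ev2101, ev2102, ev2103, ev2110, ev2111, ev2112, ev2113, ev2120, ev2121, ev2122, ev2123, ev2130, ev2131, ev2132, ev2133, ev2200, ev2201, ev2202, ev2203, ev2210, ev2211, ev2212, ev2213, ev2220, ev2221, ev2222, ev2223, ev2230, ev2231, ev2232, ev2233, ev2300, ev2301, ev2302, ev2303, ev2310, ev2311, ev2312, ev2313, ev2320, ev2321, ev2322, ev2323, ev2330, ev2331, ev2332, ev2333, ev3000, ev3001, ev3002, ev3003, ev3010, ev3011, ev3012, ev3013, ev3020, ev3021, ev3022, ev3023, ev3030, ev3031, ev3032, ev3033, ev3100, ev3101, ev3102, ev3103, ev3110, ev3111, ev3112, ev3113, ev3120, ev3121, ev3122, ev3123, ev3130, ev3131, ev3132, ev3133, ev3200,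 ev3201, ev3202, ev3203, ev3210, ev3211, ev3212, ev3213, ev3220, ev3221, ev3222, ev3223, ev3230, ev3231, ev3232, ev3233, ev3300, ev3301, ev3302, ev3303, ev3310, ev3311, ev3312, ev3313, ev3320, ev3321, ev3322, ev3323, ev3330, ev3331, ev3332, ev3333] at h0 h1 h2 h3
  rw [Fin.sum_univ_four] at hU
  ext M N
  simp only [wedgeV, Matrix.of_apply, Fin.sum_univ_four]
  fin_cases M <;> fin_cases N <;>
    simp only [Fin.isValue, Fin.mk_zero, Fin.mk_one,
      show ((⟨2, by norm_num⟩ : Fin 4) = 2) from rfl,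
      show ((⟨3, by norm_num⟩ : Fin 4) = 3) from rfl]
  · linear_combination (-(a 0 * b 0 - a 0 * b 0)) * hU
  · linear_combination (-(-U 3)) * h2 + (-(U 2)) * h3 + (-(a 0 * b 1 - a 1 * b 0)) * hU
  · linear_combination (-(U 3)) * h1 + (-(-U 1)) * h3 + (-(a 0 * b 2 - a 2 * b 0)) * hU
  · linear_combination (-(-U 2)) * h1 + (-(U 1)) * h2 + (-(a 0 * b 3 - a 3 * b 0)) * hU
  · linear_combination (-(U 3)) * h2 + (-(-U 2)) * h3 + (-(a 1 * b 0 - a 0 * b 1)) * hU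
  · linear_combination (-(a 1 * b 1 - a 1 * b 1)) * hU
  · linear_combination (-(-U 3)) * h0 + (-(U 0)) * h3 + (-(a 1 * b 2 - a 2 * b 1)) * hU
  · linear_combination (-(U 2)) * h0 + (-(-U 0)) * h2 + (-(a 1 * b 3 - a 3 * b 1)) * hU
  · linear_combination (-(-U 3)) * h1 + (-(U 1)) * h3 + (-(a 2 * b 0 - a 0 * b 2)) * hU
  · linear_combination (-(U 3)) * h0 + (-(-U 0)) * h3 + (-(a 2 * b 1 - a 1 * b 2)) * hU
  · linear_combination (-(a 2 * b 2 - a 2 * b 2)) * hU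
  · linear_combination (-(-U 1)) * h0 + (-(U 0)) * h1 + (-(a 2 * b 3 - a 3 * b 2)) * hU
  · linear_combination (-(U 2)) * h1 + (-(-U 1)) * h2 + (-(a 3 * b 0 - a 0 * b 3)) * hU
  · linear_combination (-(-U 2)) * h0 + (-(U 0)) * h2 + (-(a 3 * b 1 - a 1 * b 3)) * hU
  · linear_combination (-(U 1)) * h0 + (-(-U 0)) * h1 + (-(a 3 * b 2 - a 2 * b 3)) * hU
  · linear_combination (-(a 3 * b 3 - a 3 * b 3)) * hU

set_option maxHeartbeats 1000000 in
lemma part1_bwd (U N : Fin 4 → ℝ) :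
    ∀ I, ∑ J, hodge (wedgeV U N) I J * U J = 0 := by
  intro I; fin_cases I <;>
    simp only [Fin.isValue, Fin.mk_zero, Fin.mk_one,
      show ((⟨2, by norm_num⟩ : Fin 4) = 2) from rfl,
      show ((⟨3, by norm_num⟩ : Fin 4) = 3) from rfl,
      hodge, wedgeV, Matrix.of_apply, Fin.sum_univ_four, ev0000, ev0001, ev0002, ev0003, ev0010, ev0011, ev0012, ev0013, ev0020, ev0021, ev0022, ev0023, ev0030, ev0031, ev0032, ev0033, ev0100, ev0101, ev0102, ev0103, ev0110, ev0111, ev0112, ev0113, ev0120, ev0121, ev0122, ev0123, ev0130, ev0131, ev0132, ev0133, ev0200, ev0201, ev0202, ev0203, ev0210, ev0211, ev0212, ev0213, ev0220, ev0221, ev0222, ev0223, ev0230, ev0231, ev0232, ev0233, ev0300, ev0301, ev0302, ev0303, ev0310, ev0311, ev0312, ev0313, ev0320, ev0321, ev0322, ev0323, ev0330, ev0331, ev0332, ev0333, ev1000, ev1001, ev1002, ev1003, ev1010, ev1011, ev1012, ev1013, ev1020, ev1021, ev1022, ev1023, ev1030, ev1031, ev1032, ev1033, ev1100, ev1101, ev1102,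 ev1103, ev1110, ev1111, ev1112, ev1113, ev1120, ev1121, ev1122, ev1123, ev1130, ev1131, ev1132, ev1133, ev1200, ev1201, ev1202, ev1203, ev1210, ev1211, ev1212, ev1213, ev1220, ev1221, ev1222, ev1223, ev1230, ev1231, ev1232, ev1233, ev1300, ev1301, ev1302, ev1303, ev1310, ev1311, ev1312, ev1313, ev1320, ev1321, ev1322, ev1323, ev1330, ev1331, ev1332, ev1333, ev2000, ev2001, ev2002, ev2003, ev2010, ev2011, ev2012, ev2013, ev2020, ev2021, ev2022, ev2023, ev2030, ev2031, ev2032, ev2033, ev2100, ev2101, ev2102, ev2103, ev2110, ev2111, ev2112, ev2113, ev2120, ev2121, ev2122, ev2123, ev2130, ev2131, ev2132, ev2133, ev2200, ev2201, ev2202, ev2203, ev2210, ev2211, ev2212, ev2213, ev2220, ev2221, ev2222, ev2223, ev2230, ev2231, ev2232, ev2233, ev2300, ev2301, ev2302, ev2303, ev2310, ev2311, ev2312, ev2313, ev2320, ev2321, ev2322, ev2323, ev2330, ev2331, ev2332, ev2333, ev3000, ev3001, ev3002, ev3003, ev3010, ev3011, ev3012, ev3013, ev3020, ev3021, ev3022,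 ev3023, ev3030, ev3031, ev3032, ev3033, ev3100, ev3101, ev3102, ev3103, ev3110, ev3111, ev3112, ev3113, ev3120, ev3121, ev3122, ev3123, ev3130, ev3131, ev3132, ev3133, ev3200, ev3201, ev3202, ev3203, ev3210, ev3211, ev3212, ev3213, ev3220, ev3221, ev3222, ev3223, ev3230, ev3231, ev3232, ev3233, ev3300, ev3301, ev3302, ev3303, ev3310, ev3311, ev3312, ev3313, ev3320, ev3321, ev3322, ev3323, ev3330, ev3331, ev3332, ev3333] <;> ring

lemma su2vec_eq (v : Fin 3 → ℝ) :
    su2vec v = !![(v 2 : ℂ), (v 0 : ℂ) - (v 1 : ℂ) * Complex.I;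
                  (v 0 : ℂ) + (v 1 : ℂ) * Complex.I, -(v 2 : ℂ)] := by
  ext i j
  fin_cases i <;> fin_cases j <;>
    simp [su2vec, σ, Fin.sum_univ_three] <;> ring

lemma u_eq (u0 : ℝ) (w : Fin 3 → ℝ) :
    (u0 : ℂ) • (1 : Matrix (Fin 2) (Fin 2) ℂ) + Complex.I • su2vec w =
      !![(u0 : ℂ) + (w 2 : ℂ) * Complex.I, (w 1 : ℂ) + (w 0 : ℂ) * Complex.I;
         -(w 1 : ℂ) + (w 0 : ℂ) * Complex.I, (u0 : ℂ) - (w 2 : ℂ) * Complex.I] := by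
  rw [su2vec_eq]
  ext i j
  fin_cases i <;> fin_cases j <;> simp [Matrix.one_apply, Complex.I_sq] <;> ring_nf <;>
    simp [Complex.I_sq] <;> ring

lemma star_u (u0 : ℝ) (w : Fin 3 → ℝ) :
    star ((u0 : ℂ) • (1 : Matrix (Fin 2) (Fin 2) ℂ) + Complex.I • su2vec w) =
      !![(u0 : ℂ) - (w 2 : ℂ) * Complex.I, -(w 1 : ℂ) - (w 0 : ℂ) * Complex.I;
         (w 1 : ℂ) - (w 0 : ℂ) * Complex.I, (u0 : ℂ) + (w 2 : ℂ) * Complex.I] := by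
  rw [u_eq]
  ext i j
  fin_cases i <;> fin_cases j <;>
    simp [Matrix.star_apply, Matrix.conjTranspose_apply] <;> ring

lemma star_u_mul_u (u0 : ℝ) (w : Fin 3 → ℝ)
    (h : u0 ^ 2 + (w 0 ^ 2 + w 1 ^ 2 + w 2 ^ 2) = 1) :
    star ((u0 : ℂ) • (1 : Matrix (Fin 2) (Fin 2) ℂ) + Complex.I • su2vec w) *
      ((u0 : ℂ) • (1 : Matrix (Fin 2) (Fin 2) ℂ) + Complex.I • su2vec w) = 1 := by
  have hc : (u0 : ℂ) ^ 2 + ((w 0 : ℂ) ^ 2 + (w 1 : ℂ) ^ 2 + (w 2 : ℂ) ^ 2) = 1 := by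
    exact_mod_cast congrArg (Complex.ofReal) h
  rw [star_u, u_eq]
  ext i j
  fin_cases i <;> fin_cases j <;>
    simp [Matrix.mul_apply, Fin.sum_univ_two, Matrix.one_apply] <;>
    first
      | linear_combination hc - ((w 2:ℂ)^2 + (w 0:ℂ)^2) * Complex.I_sq
      | ring

lemma u_mul_star_u (u0 : ℝ) (w : Fin 3 → ℝ)
    (h : u0 ^ 2 + (w 0 ^ 2 + w 1 ^ 2 + w 2 ^ 2) = 1) :
    ((u0 : ℂ) • (1 : Matrix (Fin 2) (Fin 2) ℂ) + Complex.I • su2vec w) *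
      star ((u0 : ℂ) • (1 : Matrix (Fin 2) (Fin 2) ℂ) + Complex.I • su2vec w) = 1 := by
  have hc : (u0 : ℂ) ^ 2 + ((w 0 : ℂ) ^ 2 + (w 1 : ℂ) ^ 2 + (w 2 : ℂ) ^ 2) = 1 := by
    exact_mod_cast congrArg (Complex.ofReal) h
  rw [star_u, u_eq]
  ext i j
  fin_cases i <;> fin_cases j <;>
    simp [Matrix.mul_apply, Fin.sum_univ_two, Matrix.one_apply] <;>
    first
      | linear_combination hc - ((w 2:ℂ)^2 + (w 0:ℂ)^2) * Complex.I_sq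
      | ring

lemma trace_su2vec_sq (v : Fin 3 → ℝ) :
    Matrix.trace (su2vec v * su2vec v) = ((2 * ∑ i, v i ^ 2 : ℝ) : ℂ) := by
  rw [su2vec_eq]
  simp [Matrix.trace_fin_two, Matrix.mul_apply, Fin.sum_univ_two, Fin.sum_univ_three]
  linear_combination (-2 * (v 1:ℂ)^2) * Complex.I_sq

lemma part2 (u0 : ℝ) (w p m : Fin 3 → ℝ)
    (h : u0 ^ 2 + (w 0 ^ 2 + w 1 ^ 2 + w 2 ^ 2) = 1) :
    (((u0 : ℂ) • (1 : Matrix (Fin 2) (Fin 2) ℂ) + Complex.I • su2vec w) * su2vec p +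
        su2vec m * ((u0 : ℂ) • (1 : Matrix (Fin 2) (Fin 2) ℂ) + Complex.I • su2vec w) = 0) ↔
      (su2vec m = -(((u0 : ℂ) • (1 : Matrix (Fin 2) (Fin 2) ℂ) + Complex.I • su2vec w) *
            su2vec p * star ((u0 : ℂ) • (1 : Matrix (Fin 2) (Fin 2) ℂ) + Complex.I • su2vec w)) ∧
        ∑ i, p i ^ 2 = ∑ i, m i ^ 2) := by
  set u : Matrix (Fin 2) (Fin 2) ℂ :=
    (u0 : ℂ) • (1 : Matrix (Fin 2) (Fin 2) ℂ) + Complex.I • su2vec w with hu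
  set P := su2vec p
  set M := su2vec m
  have hsu : star u * u = 1 := star_u_mul_u u0 w h
  have hus : u * star u = 1 := u_mul_star_u u0 w h
  constructor
  · intro hs
    have h1 : M * u = -(u * P) := eq_neg_of_add_eq_zero_right hs
    have hm : M = -(u * P * star u) := by
      calc M = M * (u * star u) := by rw [hus, Matrix.mul_one]
        _ = (M * u) * star u := by rw [Matrix.mul_assoc]
        _ = -(u * P) * star u := by rw [h1]
        _ = -(u * P * star u) := by rw [neg_mul]
    refine ⟨hm, ?_⟩
    have e1 : (u * P * star u) * (u * P * star u) = (u * (P * P)) * star u := by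
      calc (u * P * star u) * (u * P * star u)
          = (u * P) * ((star u * u) * (P * star u)) := by noncomm_ring
        _ = (u * P) * (P * star u) := by rw [hsu, Matrix.one_mul]
        _ = (u * (P * P)) * star u := by noncomm_ring
    have e2 : Matrix.trace (M * M) = Matrix.trace (P * P) := by
      rw [hm, neg_mul_neg, e1, Matrix.trace_mul_comm, ← Matrix.mul_assoc, hsu,
        Matrix.one_mul]
    rw [trace_su2vec_sq, trace_su2vec_sq] at e2
    have := Complex.ofReal_inj.mp e2
    linarith
  · rintro ⟨hm, -⟩
    rw [hm, neg_mul, Matrix.mul_assoc (u * P) (star u) u, hsu, Matrix.mul_one]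
    exact add_neg_cancel _

/-- a bivector is simple with (⋆X)·Û = 0 iff X = Û ∧ N; equivalently, in the
self-dual/anti-self-dual picture, uX⁺ + X⁻u = 0 iff X⁻ = −uX⁺u⁻¹ (and then |X⁺| = |X⁻|). -/
theorem stmt4 (X : Matrix (Fin 4) (Fin 4) ℝ) (hXa : Xᵀ = -X)
    (U : Fin 4 → ℝ) (hU : ∑ I, U I ^ 2 = 1) :
    ((∃ a b : Fin 4 → ℝ, X = wedgeV a b) ∧ (∀ I, ∑ J, hodge X I J * U J = 0) ↔
        ∃ N : Fin 4 → ℝ, X = wedgeV U N) ∧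
      ((((U 0 : ℂ) • (1 : Matrix (Fin 2) (Fin 2) ℂ) + Complex.I • su2vec (fun i => U i.succ)) *
            su2vec (sdPart X) +
          su2vec (asdPart X) *
            ((U 0 : ℂ) • (1 : Matrix (Fin 2) (Fin 2) ℂ) + Complex.I • su2vec (fun i => U i.succ)) = 0) ↔
        (su2vec (asdPart X) =
            -(((U 0 : ℂ) • (1 : Matrix (Fin 2) (Fin 2) ℂ) + Complex.I • su2vec (fun i => U i.succ)) *
                su2vec (sdPart X) *
                star ((U 0 : ℂ) • (1 : Matrix (Fin 2) (Fin 2) ℂ) +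
                  Complex.I • su2vec (fun i => U i.succ))) ∧
          ∑ i, sdPart X i ^ 2 = ∑ i, asdPart X i ^ 2)) := by
  constructor
  · constructor
    · rintro ⟨⟨a, b, rfl⟩, hh⟩
      exact ⟨_, part1_fwd U a b hU hh⟩
    · rintro ⟨N, hX⟩
      exact ⟨⟨U, N, hX⟩, by rw [hX]; exact part1_bwd U N⟩
  · have hw : U 0 ^ 2 + ((fun i : Fin 3 => U i.succ) 0 ^ 2 + (fun i : Fin 3 => U i.succ) 1 ^ 2 +
        (fun i : Fin 3 => U i.succ) 2 ^ 2) = 1 := by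
      rw [Fin.sum_univ_four] at hU
      show U 0 ^ 2 + (U 1 ^ 2 + U 2 ^ 2 + U 3 ^ 2) = 1
      linarith
    exact part2 (U 0) (fun i => U i.succ) (sdPart X) (asdPart X) hw
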